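/- In the reduction graph G' built from an undirected graph G (as in the independent-set reduction), for every set S' ⊆ V' ∪ V'' there exists an independent set I in G with |I| ≥ δ(S'), where δ(S') = |reach_{E'∪E''}(S')| − |reach_{E'}(S')|. -/

import Mathlib

/-- Vertices reachable from `S` via directed edges given by relation `E`. -/
def reach {V : Type*} (E : V → V → Prop) (S : Set V) : Set V :=
  {v | ∃ s ∈ S, Relation.ReflTransGen E s v}

/-- Edges E' of the reduction graph: (v'_i, v''_j) whenever {v_i, v_j} is an edge of G.
`Sum.inl` is the copy V', `Sum.inr` the copy V''. -/
def E1 {V : Type*} (Adj : V → V → Prop) : (V ⊕ V) → (V ⊕ V) → Prop :=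
  fun a b => ∃ i j, Adj i j ∧ a = Sum.inl i ∧ b = Sum.inr j

/-- Edges E'' of the reduction graph: (v'_i, v''_i) for every vertex v_i of G. -/
def E2 {V : Type*} : (V ⊕ V) → (V ⊕ V) → Prop :=
  fun a b => ∃ i, a = Sum.inl i ∧ b = Sum.inr i

/-- Influence difference δ(S) = |reach_{E'∪E''}(S)| − |reach_{E'}(S)|. -/
noncomputable def delta {V : Type*} [Fintype V] (Adj : V → V → Prop) (S : Set (V ⊕ V)) : ℤ :=
  ((reach (fun a b => E1 Adj a b ∨ E2 a b) S).ncard : ℤ) - ((reach (E1 Adj) S).ncard : ℤ)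

theorem independent_ge_delta {V : Type*} [Fintype V] (Adj : V → V → Prop)
    (hsym : ∀ i j, Adj i j → Adj j i) (S' : Set (V ⊕ V)) :
    ∃ I : Set V, (∀ i ∈ I, ∀ j ∈ I, ¬ Adj i j) ∧ delta Adj S' ≤ (I.ncard : ℤ) := by
  classical
  set I : Set V := {i | Sum.inl i ∈ S' ∧ ∀ k, Sum.inl k ∈ S' → ¬ Adj k i} with hI
  refine ⟨I, ?_, ?_⟩
  · intro i hi j hj hadj
    exact hj.2 i hi.1 hadj
  · -- key inclusion
    have hstep : ∀ s v : V ⊕ V, Relation.ReflTransGen (fun a b => E1 Adj a b ∨ E2 a b) s v →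
        s = v ∨ (E1 Adj s v ∨ E2 s v) := by
      intro s v h
      induction h with
      | refl => exact Or.inl rfl
      | tail h1 h2 ih =>
        rename_i b c
        have hb : ∃ i, b = Sum.inl i := by
          rcases h2 with ⟨i, j, _, hb, _⟩ | ⟨i, hb, _⟩ <;> exact ⟨_, hb⟩
        rcases ih with rfl | h
        · exact Or.inr h2
        · exfalso
          rcases h with ⟨i, j, _, _, hb'⟩ | ⟨i, _, hb'⟩ <;>
            { obtain ⟨k, hk⟩ := hb; rw [hk] at hb'; exact Sum.inl_ne_inr hb' }
    have hsub : reach (fun a b => E1 Adj a b ∨ E2 a b) S' ⊆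
        reach (E1 Adj) S' ∪ (Sum.inr '' I) := by
      rintro v ⟨s, hs, hrt⟩
      rcases hstep s v hrt with rfl | h
      · exact Or.inl ⟨_, hs, Relation.ReflTransGen.refl⟩
      rcases h with h | ⟨i, hsi, hvi⟩
      · exact Or.inl ⟨s, hs, Relation.ReflTransGen.single h⟩
      by_cases hni : ∃ k, Sum.inl k ∈ S' ∧ Adj k i
      · obtain ⟨k, hk, hadj⟩ := hni
        exact Or.inl ⟨Sum.inl k, hk,
          Relation.ReflTransGen.single ⟨k, i, hadj, rfl, hvi⟩⟩
      · push_neg at hni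
        subst hsi
        exact Or.inr ⟨i, ⟨hs, hni⟩, hvi.symm⟩
    have h1 : (reach (fun a b => E1 Adj a b ∨ E2 a b) S').ncard ≤
        (reach (E1 Adj) S').ncard + (Sum.inr '' I : Set (V ⊕ V)).ncard := by
      calc (reach (fun a b => E1 Adj a b ∨ E2 a b) S').ncard
          ≤ (reach (E1 Adj) S' ∪ (Sum.inr '' I)).ncard :=
            Set.ncard_le_ncard hsub (Set.toFinite _)
        _ ≤ _ := Set.ncard_union_le _ _
    have h2 : (Sum.inr '' I : Set (V ⊕ V)).ncard = I.ncard :=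
      Set.ncard_image_of_injective _ Sum.inr_injective
    unfold delta
    omega
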